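/- In over-parameterized fixed-design linear regression, the average over the training inputs of the total prediction variance equals (r/m)σ², where r = rank(X); in particular it is bounded independently of the number of parameters N. This uses that P⊥xᵢ = 0 for each training point xᵢ and Tr(ΣΣ⁺) = rank(X). -/

import Mathlib

open MeasureTheory ProbabilityTheory Matrix
open scoped NNReal ENNReal

theorem aux_XSpXtX {m N : ℕ} (X : Matrix (Fin m) (Fin N) ℝ) (Sp : Matrix (Fin N) (Fin N) ℝ)
    (hp1 : (Xᵀ * X) * Sp * (Xᵀ * X) = Xᵀ * X)
    (hp3 : ((Xᵀ * X) * Sp)ᵀ = (Xᵀ * X) * Sp) :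
    X * Sp * (Xᵀ * X) = X := by
  have hp1' : Xᵀ * X * Sp * Xᵀ * X = Xᵀ * X := by
    simpa only [← Matrix.mul_assoc] using hp1
  have h5 := congrArg (fun B => Xᵀ * X * Spᵀ * B) hp1
  simp only [← Matrix.mul_assoc] at h5
  have key : (X * Sp * (Xᵀ * X) - X)ᵀ * (X * Sp * (Xᵀ * X) - X) = 0 := by
    simp only [transpose_sub, transpose_mul, transpose_transpose, Matrix.sub_mul,
      Matrix.mul_sub, ← Matrix.mul_assoc]
    rw [h5, hp1']
    abel
  have h0 : X * Sp * (Xᵀ * X) - X = 0 := by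
    have := Matrix.conjTranspose_mul_self_eq_zero (A := X * Sp * (Xᵀ * X) - X)
    rw [conjTranspose_eq_transpose_of_trivial] at this
    exact this.mp key
  exact sub_eq_zero.mp h0

theorem aux_trace_rank {N : ℕ} (P : Matrix (Fin N) (Fin N) ℝ)
    (hsymm : Pᵀ = P) (hidem : P * P = P) :
    P.trace = (P.rank : ℝ) := by
  have hHerm : P.IsHermitian := by
    rwa [Matrix.IsHermitian, conjTranspose_eq_transpose_of_trivial]
  have key : ∀ (t : ℝ) (v : Fin N → ℝ), v ≠ 0 → P *ᵥ v = t • v → t = 0 ∨ t = 1 := by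
    intro t v hvne hv
    have hv2 : P *ᵥ (P *ᵥ v) = (t * t) • v := by
      rw [hv, Matrix.mulVec_smul, hv, smul_smul]
    rw [Matrix.mulVec_mulVec, hidem, hv] at hv2
    have h0 : (t - t * t) • v = 0 := by rw [sub_smul, hv2, sub_self]
    rcases smul_eq_zero.mp h0 with h | h
    · have h' : t * (1 - t) = 0 := by ring_nf; linarith [h]
      rcases mul_eq_zero.mp h' with h'' | h''
      · exact Or.inl h''
      · exact Or.inr (by linarith)
    · exact absurd h hvne
  have heig : ∀ i, hHerm.eigenvalues i = 0 ∨ hHerm.eigenvalues i = 1 := by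
    intro i
    refine key _ _ ?_ (hHerm.mulVec_eigenvectorBasis i)
    intro h
    exact hHerm.eigenvectorBasis.orthonormal.ne_zero i (by ext j; exact congrFun h j)
  have htr : P.trace = ∑ i, hHerm.eigenvalues i := by
    conv_lhs => rw [hHerm.spectral_theorem]
    simp only [Unitary.conjStarAlgAut_apply, Unitary.coe_star]
    rw [Matrix.trace_mul_cycle]
    have hU : (star (hHerm.eigenvectorUnitary : Matrix (Fin N) (Fin N) ℝ)) *
        (hHerm.eigenvectorUnitary : Matrix (Fin N) (Fin N) ℝ) = 1 :=
      Matrix.UnitaryGroup.star_mul_self _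
    rw [hU, Matrix.one_mul, Matrix.trace_diagonal]
    simp
  rw [htr, hHerm.rank_eq_card_non_zero_eigs]
  rw [Fintype.card_subtype]
  rw [← Finset.sum_filter_add_sum_filter_not Finset.univ (fun i => hHerm.eigenvalues i ≠ 0)]
  have h1 : ∑ i ∈ Finset.univ.filter (fun i => hHerm.eigenvalues i ≠ 0), hHerm.eigenvalues i
      = ((Finset.univ.filter (fun i => hHerm.eigenvalues i ≠ 0)).card : ℝ) := by
    rw [Finset.card_eq_sum_ones]
    push_cast
    refine Finset.sum_congr rfl fun i hi => ?_
    rcases heig i with h | h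
    · exact absurd h (Finset.mem_filter.mp hi).2
    · rw [h]
  have h2 : ∑ i ∈ Finset.univ.filter (fun i => ¬ hHerm.eigenvalues i ≠ 0),
      hHerm.eigenvalues i = 0 := by
    refine Finset.sum_eq_zero fun i hi => ?_
    simpa using (Finset.mem_filter.mp hi).2
  rw [h1, h2, add_zero]

theorem aux_var {Ω : Type*} [MeasurableSpace Ω] (μ : Measure Ω) [IsProbabilityMeasure μ]
    {m : ℕ} (ε : Ω → Fin m → ℝ) (σ : ℝ)
    (hεmeas : ∀ i, MemLp (fun ω => ε ω i) 2 μ)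
    (hεmean : ∀ i, ∫ ω, ε ω i ∂μ = 0)
    (hεcov : ∀ i j, ∫ ω, ε ω i * ε ω j ∂μ = σ ^ 2 * (if i = j then 1 else 0))
    (a : Fin m → ℝ) (c : ℝ) :
    variance (fun ω => c + ∑ j, a j * ε ω j) μ = σ ^ 2 * ∑ j, (a j) ^ 2 := by
  have hg : MemLp (fun ω => ∑ j, a j * ε ω j) 2 μ := by
    have := memLp_finset_sum' (μ := μ) (p := (2 : ℝ≥0∞)) Finset.univ
      (f := fun j (ω : Ω) => a j * ε ω j) (fun j _ => (hεmeas j).const_mul (a j))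
    convert this using 1
    ext ω
    simp [Finset.sum_apply]
  have hf : MemLp (fun ω => c + ∑ j, a j * ε ω j) 2 μ := by
    exact (memLp_const c).add hg
  have hgint : Integrable (fun ω => ∑ j, a j * ε ω j) μ := hg.integrable one_le_two
  have hEg : ∫ ω, (∑ j, a j * ε ω j) ∂μ = 0 := by
    rw [integral_finset_sum _ (fun j _ => (((hεmeas j).integrable one_le_two).const_mul (a j)))]
    simp [integral_const_mul, hεmean]
  have hprodint : ∀ j k : Fin m, Integrable (fun ω => (a j * ε ω j) * (a k * ε ω k)) μ := by
    intro j k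
    have h1 : MemLp ((fun ω => a j * ε ω j) • (fun ω => a k * ε ω k)) 1 μ := by
      exact MemLp.smul (r := 1) ((hεmeas k).const_mul (a k)) ((hεmeas j).const_mul (a j))
    rw [memLp_one_iff_integrable] at h1
    exact h1
  have hEg2 : ∫ ω, (∑ j, a j * ε ω j) ^ 2 ∂μ = σ ^ 2 * ∑ j, (a j) ^ 2 := by
    have hexp : ∀ ω, (∑ j, a j * ε ω j) ^ 2 = ∑ j, ∑ k, (a j * ε ω j) * (a k * ε ω k) := by
      intro ω
      rw [sq, Finset.sum_mul_sum]
    simp_rw [hexp]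
    rw [integral_finset_sum _ (fun j _ => integrable_finset_sum _ (fun k _ => hprodint j k))]
    have : ∀ j : Fin m, ∫ ω, (∑ k, (a j * ε ω j) * (a k * ε ω k)) ∂μ = σ ^ 2 * (a j) ^ 2 := by
      intro j
      rw [integral_finset_sum _ (fun k _ => hprodint j k)]
      have : ∀ k : Fin m, ∫ ω, (a j * ε ω j) * (a k * ε ω k) ∂μ
          = a j * a k * (σ ^ 2 * (if j = k then 1 else 0)) := by
        intro k
        rw [← hεcov j k, ← integral_const_mul]
        congr 1; ext ω; ring
      simp_rw [this]
      rw [Finset.sum_eq_single j]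
      · simp [sq]; ring
      · intro k _ hk; simp [Ne.symm hk]
      · intro h; simp at h
    simp_rw [this]
    rw [← Finset.mul_sum]
  rw [variance_eq_sub hf]
  have hEf : ∫ ω, (c + ∑ j, a j * ε ω j) ∂μ = c := by
    rw [integral_add (integrable_const c) hgint, hEg, integral_const]
    simp
  have hEf2 : ∫ ω, (c + ∑ j, a j * ε ω j) ^ 2 ∂μ = c ^ 2 + σ ^ 2 * ∑ j, (a j) ^ 2 := by
    have hexp : ∀ ω, (c + ∑ j, a j * ε ω j) ^ 2
        = c ^ 2 + 2 * c * (∑ j, a j * ε ω j) + (∑ j, a j * ε ω j) ^ 2 := by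
      intro ω; ring
    simp_rw [hexp]
    have hsq : Integrable (fun ω => (∑ j, a j * ε ω j) ^ 2) μ := by
      have := hg.integrable_sq
      simpa using this
    have hint1 : Integrable (fun ω => c ^ 2 + 2 * c * ∑ j, a j * ε ω j) μ := by
      have := (integrable_const (c ^ 2)).add (hgint.const_mul (2 * c))
      simpa using this
    rw [integral_add hint1 hsq,
      integral_add (integrable_const (c ^ 2)) (hgint.const_mul (2 * c)),
      integral_const, integral_const_mul, hEg, hEg2]
    simp
  simp only [Pi.pow_apply]
  rw [hEf2, hEf]
  ring

/-- In over-parameterized fixed-design linear regression, the average over the training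
inputs (rows of `X`) of the total prediction variance equals `σ²·rank(X)/m`; in particular
it is bounded independently of the number of parameters `N`. -/
theorem overparam_average_prediction_variance
    {Ω : Type*} [MeasurableSpace Ω] (μ : Measure Ω) [IsProbabilityMeasure μ]
    (m N : ℕ) (hmN : m < N) (hm : 0 < m)
    (X : Matrix (Fin m) (Fin N) ℝ) (θ : Fin N → ℝ) (σ : ℝ)
    (Sp : Matrix (Fin N) (Fin N) ℝ)
    (hp1 : (Xᵀ * X) * Sp * (Xᵀ * X) = Xᵀ * X)
    (hp2 : Sp * (Xᵀ * X) * Sp = Sp)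
    (hp3 : ((Xᵀ * X) * Sp)ᵀ = (Xᵀ * X) * Sp)
    (hp4 : (Sp * (Xᵀ * X))ᵀ = Sp * (Xᵀ * X))
    (Pperp : Matrix (Fin N) (Fin N) ℝ) (hP : Pperp = 1 - Sp * (Xᵀ * X))
    (θ₀ : Ω → Fin N → ℝ) (hθ₀meas : Measurable θ₀)
    (hθ₀ : Measure.map θ₀ μ = Measure.pi fun _ : Fin N => gaussianReal 0 (N : ℝ≥0)⁻¹)
    (ε : Ω → Fin m → ℝ)
    (hεmeas : ∀ i, MemLp (fun ω => ε ω i) 2 μ)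
    (hεmean : ∀ i, ∫ ω, ε ω i ∂μ = 0)
    (hεcov : ∀ i j, ∫ ω, ε ω i * ε ω j ∂μ = σ ^ 2 * (if i = j then 1 else 0))
    (hindep : IndepFun θ₀ ε μ) :
    (1 / (m : ℝ)) * ∑ i : Fin m,
        variance (fun ω =>
          (X i) ⬝ᵥ (Pperp *ᵥ θ₀ ω + Sp *ᵥ (Xᵀ *ᵥ (X *ᵥ θ + ε ω)))) μ
      = σ ^ 2 * (X.rank : ℝ) / m := by
  have hXP : X * Sp * (Xᵀ * X) = X := aux_XSpXtX X Sp hp1 hp3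
  have hXPperp : X * Pperp = 0 := by
    rw [hP, Matrix.mul_sub, Matrix.mul_one, ← Matrix.mul_assoc, hXP, sub_self]
  set M : Matrix (Fin m) (Fin m) ℝ := X * Sp * Xᵀ with hM
  -- pointwise simplification of the random variables
  have hfun : ∀ i : Fin m,
      (fun ω => (X i) ⬝ᵥ (Pperp *ᵥ θ₀ ω + Sp *ᵥ (Xᵀ *ᵥ (X *ᵥ θ + ε ω))))
      = fun ω => (M *ᵥ (X *ᵥ θ)) i + ∑ j, M i j * ε ω j := by
    intro i
    funext ω
    have hd : ∀ v : Fin N → ℝ, (X i) ⬝ᵥ v = (X *ᵥ v) i := fun v => rfl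
    rw [hd]
    have : X *ᵥ (Pperp *ᵥ θ₀ ω + Sp *ᵥ (Xᵀ *ᵥ (X *ᵥ θ + ε ω)))
        = (X * Pperp) *ᵥ θ₀ ω + ((X * Sp * Xᵀ) *ᵥ (X *ᵥ θ) + (X * Sp * Xᵀ) *ᵥ ε ω) := by
      simp only [Matrix.mulVec_add, Matrix.mulVec_mulVec, Matrix.mul_assoc]
    rw [this, hXPperp, Matrix.zero_mulVec, zero_add]
    simp only [Pi.add_apply, ← hM]
    simp [Matrix.mulVec, dotProduct]
  have hvar : ∀ i : Fin m,
      variance (fun ω => (X i) ⬝ᵥ (Pperp *ᵥ θ₀ ω + Sp *ᵥ (Xᵀ *ᵥ (X *ᵥ θ + ε ω)))) μ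
      = σ ^ 2 * ∑ j, (M i j) ^ 2 := by
    intro i
    rw [hfun i]
    exact aux_var μ ε σ hεmeas hεmean hεcov (fun j => M i j) ((M *ᵥ (X *ᵥ θ)) i)
  simp_rw [hvar]
  -- the double sum is the trace of M * Mᵀ = trace of Sp * (Xᵀ * X)
  have hMMt : M * Mᵀ = X * Spᵀ * Xᵀ := by
    rw [hM]
    simp only [transpose_mul, transpose_transpose, ← Matrix.mul_assoc]
    have hXP' : X * Sp * Xᵀ * X = X := by simpa only [← Matrix.mul_assoc] using hXP
    rw [hXP']
  have hsum : ∑ i : Fin m, ∑ j : Fin m, (M i j) ^ 2 = (M * Mᵀ).trace := by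
    simp [Matrix.trace, Matrix.mul_apply, Matrix.diag, sq]
  have htrace : (M * Mᵀ).trace = (Sp * (Xᵀ * X)).trace := by
    rw [hMMt, Matrix.trace_mul_cycle, ← Matrix.trace_transpose]
    congr 1
    rw [Matrix.mul_assoc]
    rw [transpose_mul, transpose_transpose, transpose_mul, transpose_transpose]
    rw [Matrix.mul_assoc]
  -- rank identities
  have hPidem : (Sp * (Xᵀ * X)) * (Sp * (Xᵀ * X)) = Sp * (Xᵀ * X) := by
    calc (Sp * (Xᵀ * X)) * (Sp * (Xᵀ * X)) = (Sp * (Xᵀ * X) * Sp) * (Xᵀ * X) := by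
          simp only [Matrix.mul_assoc]
      _ = Sp * (Xᵀ * X) := by rw [hp2]
  have hrank : (Sp * (Xᵀ * X)).rank = X.rank := by
    refine le_antisymm ?_ ?_
    · calc (Sp * (Xᵀ * X)).rank ≤ (Xᵀ * X).rank := Matrix.rank_mul_le_right _ _
        _ = X.rank := Matrix.rank_transpose_mul_self X
    · calc X.rank = (X * (Sp * (Xᵀ * X))).rank := by rw [← Matrix.mul_assoc, hXP]
        _ ≤ (Sp * (Xᵀ * X)).rank := Matrix.rank_mul_le_right _ _
  have htr_rank : (Sp * (Xᵀ * X)).trace = (X.rank : ℝ) := by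
    rw [aux_trace_rank _ hp4 hPidem, hrank]
  rw [← Finset.mul_sum, hsum, htrace, htr_rank]
  have hm' : (m : ℝ) ≠ 0 := Nat.cast_ne_zero.mpr hm.ne'
  field_simp
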